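/- Let k, m be positive integers with k ≥ 1, let a ∈ ℂ^m, and let b : {1,…,m}^k → ℂ be alternating, i.e., b(J∘σ) = sgn(σ)·b(J) for every tuple J ∈ {1,…,m}^k and every permutation σ of {1,…,k}. Then for every pair of indices 1 ≤ t < s ≤ k+1, Σ_{I = (i_1,…,i_{k+1}) ∈ {1,…,m}^{k+1}} (−1)^{t+s} a_{i_t} b(I_{−t}) · conj(a_{i_s}) · conj(b(I_{−s})) = − Σ_{J ∈ {1,…,m}^{k−1}} | Σ_{i=1}^m a_i · conj(b(i, J)) |^2, where I_{−t} denotes I with its t-th entry removed, (i, J) denotes the k-tuple obtained by prepending i to J, and conj denotes complex conjugation. In particular this sum is a non-positive real number. -/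

import Mathlib

open Finset

private lemma sum_insertNth {M : Type*} [AddCommMonoid M] {m n : ℕ}
    (f : (Fin (n + 1) → Fin m) → M) (p : Fin (n + 1)) :
    ∑ I : Fin (n + 1) → Fin m, f I =
      ∑ i : Fin m, ∑ c : Fin n → Fin m, f (p.insertNth i c) := by
  rw [← (Fin.insertNthEquiv (fun _ => Fin m) p).sum_comp f, Fintype.sum_prod_type]
  rfl

private lemma succAbove_val {n : ℕ} (p : Fin (n + 1)) (i : Fin n) :
    ((p.succAbove i : Fin (n + 1)) : ℕ) =
      if (i : ℕ) < (p : ℕ) then (i : ℕ) else (i : ℕ) + 1 := by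
  rcases lt_or_ge (Fin.castSucc i) p with h | h
  · rw [Fin.succAbove_of_castSucc_lt _ _ h, Fin.coe_castSucc]
    have := (Fin.lt_def).mp h
    rw [Fin.coe_castSucc] at this
    rw [if_pos this]
  · rw [Fin.succAbove_of_le_castSucc _ _ h, Fin.val_succ]
    have := (Fin.le_def).mp h
    rw [Fin.coe_castSucc] at this
    rw [if_neg (by omega)]

theorem cross_term_nonpositive
    (k m : ℕ) (hk : 0 < k) (hm : 0 < m)
    (a : Fin m → ℂ) (b : (Fin k → Fin m) → ℂ)
    (halt : ∀ (J : Fin k → Fin m) (σ : Equiv.Perm (Fin k)),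
      b (J ∘ σ) = ((Equiv.Perm.sign σ : ℤ) : ℂ) * b J)
    (t s : Fin (k + 1)) (hts : t < s) :
    ∑ I : Fin (k + 1) → Fin m,
        (-1 : ℂ) ^ ((t : ℕ) + (s : ℕ)) * a (I t) * b (I ∘ t.succAbove) *
          (starRingEnd ℂ) (a (I s)) * (starRingEnd ℂ) (b (I ∘ s.succAbove)) =
      -((∑ J : Fin (k - 1) → Fin m,
          ‖∑ i : Fin m,
            a i * (starRingEnd ℂ)
              (b (fun j => (Fin.cons i J : Fin (k - 1 + 1) → Fin m) (Fin.cast (Nat.succ_pred_eq_of_pos hk).symm j)))‖ ^ 2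
            : ℝ) : ℂ) := by
  obtain ⟨k, rfl⟩ : ∃ k', k = k' + 1 := ⟨k - 1, (Nat.succ_pred_eq_of_pos hk).symm⟩
  have hcast : ∀ (i : Fin m) (J : Fin (k + 1 - 1) → Fin m),
      (fun j => (Fin.cons i J : Fin (k + 1 - 1 + 1) → Fin m)
        (Fin.cast (Nat.succ_pred_eq_of_pos hk).symm j)) = Fin.cons i J := fun _ _ => rfl
  simp only [hcast]
  -- basic index facts
  have htv : (t : ℕ) < (s : ℕ) := hts
  have hsv : (s : ℕ) ≤ k + 1 := Nat.lt_succ_iff.mp s.isLt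
  set t' : Fin (k + 1) := ⟨(t : ℕ), by omega⟩ with ht'
  set p : Fin (k + 1) := ⟨(s : ℕ) - 1, by omega⟩ with hp
  have hpv : (p : ℕ) = (s : ℕ) - 1 := rfl
  have htv' : (t' : ℕ) = (t : ℕ) := rfl
  have h1 : t.succAbove p = s := by
    apply Fin.ext
    rw [succAbove_val, hpv]
    split_ifs <;> omega
  have h2 : s.succAbove t' = t := by
    apply Fin.ext
    rw [succAbove_val, htv']
    split_ifs <;> omega
  have hE : t.succAbove ∘ p.succAbove = s.succAbove ∘ t'.succAbove := by
    funext j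
    apply Fin.ext
    show ((t.succAbove (p.succAbove j)) : ℕ) = ((s.succAbove (t'.succAbove j)) : ℕ)
    rw [succAbove_val, succAbove_val, succAbove_val, succAbove_val, hpv, htv']
    split_ifs <;> omega
  -- the alternating move lemma
  have hb : ∀ (c : Fin (k + 1) → Fin m) (q : Fin (k + 1)),
      b c = (-1 : ℂ) ^ (q : ℕ) * b (Fin.cons (c q) (c ∘ q.succAbove)) := by
    intro c q
    have hcy : Fin.cons (c q) (c ∘ q.succAbove) = c ∘ ⇑(q.cycleRange)⁻¹ := by
      funext x
      induction x using Fin.cases with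
      | zero => simp only [Fin.cons_zero, Function.comp_apply, Equiv.Perm.inv_def,
          Fin.cycleRange_symm_zero]
      | succ j => simp only [Fin.cons_succ, Function.comp_apply, Equiv.Perm.inv_def,
          Fin.cycleRange_symm_succ]
    rw [hcy, halt c (q.cycleRange)⁻¹, Equiv.Perm.sign_inv, Fin.sign_cycleRange]
    simp only [Units.val_pow_eq_pow_val, Units.val_neg, Units.val_one]
    push_cast
    rw [← mul_assoc, ← pow_add, Even.neg_one_pow ⟨(q : ℕ), rfl⟩, one_mul]
  -- per-term rewrite
  have perI : ∀ I : Fin (k + 1 + 1) → Fin m,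
      (-1 : ℂ) ^ ((t : ℕ) + (s : ℕ)) * a (I t) * b (I ∘ t.succAbove) *
          (starRingEnd ℂ) (a (I s)) * (starRingEnd ℂ) (b (I ∘ s.succAbove)) =
      -((a (I t) * (starRingEnd ℂ) (b (Fin.cons (I t) (I ∘ (s.succAbove ∘ t'.succAbove))))) *
        ((starRingEnd ℂ) (a (I s)) * b (Fin.cons (I s) (I ∘ (s.succAbove ∘ t'.succAbove))))) := by
    intro I
    have e1 : b (I ∘ t.succAbove) =
        (-1 : ℂ) ^ ((s : ℕ) - 1) *
          b (Fin.cons (I s) (I ∘ (s.succAbove ∘ t'.succAbove))) := by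
      have h3 : (I ∘ t.succAbove) ∘ p.succAbove = I ∘ (s.succAbove ∘ t'.succAbove) := by
        rw [Function.comp_assoc, hE]
      have h4 : (I ∘ t.succAbove) p = I s := by
        simp only [Function.comp_apply, h1]
      rw [hb (I ∘ t.succAbove) p, h3, h4, hpv]
    have e2 : b (I ∘ s.succAbove) =
        (-1 : ℂ) ^ (t : ℕ) *
          b (Fin.cons (I t) (I ∘ (s.succAbove ∘ t'.succAbove))) := by
      have h3 : (I ∘ s.succAbove) ∘ t'.succAbove = I ∘ (s.succAbove ∘ t'.succAbove) :=
        Function.comp_assoc _ _ _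
      have h4 : (I ∘ s.succAbove) t' = I t := by
        simp only [Function.comp_apply, h2]
      rw [hb (I ∘ s.succAbove) t', h3, h4, htv']
    have hsign : (-1 : ℂ) ^ ((t : ℕ) + (s : ℕ)) * (-1 : ℂ) ^ ((s : ℕ) - 1) *
        (-1 : ℂ) ^ (t : ℕ) = -1 := by
      rw [← pow_add, ← pow_add]
      exact Odd.neg_one_pow ⟨(t : ℕ) + (s : ℕ) - 1, by omega⟩
    rw [e1, e2, map_mul]
    have hconj : (starRingEnd ℂ) ((-1 : ℂ) ^ (t : ℕ)) = (-1 : ℂ) ^ (t : ℕ) := by simp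
    rw [hconj]
    linear_combination (a (I t) * (starRingEnd ℂ) (a (I s)) *
      b (Fin.cons (I s) (I ∘ (s.succAbove ∘ t'.succAbove))) *
      (starRingEnd ℂ) (b (Fin.cons (I t) (I ∘ (s.succAbove ∘ t'.succAbove))))) * hsign
  rw [Finset.sum_congr rfl fun I _ => perI I]
  -- peel off coordinate t, then coordinate p
  rw [sum_insertNth (fun I => -((a (I t) * (starRingEnd ℂ)
        (b (Fin.cons (I t) (I ∘ (s.succAbove ∘ t'.succAbove))))) *
        ((starRingEnd ℂ) (a (I s)) * b (Fin.cons (I s) (I ∘ (s.succAbove ∘ t'.succAbove)))))) t]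
  have step1 : ∀ (i : Fin m) (c : Fin (k + 1) → Fin m),
      -((a ((@Fin.insertNth (k+1) (fun _ => Fin m) t i c) t) * (starRingEnd ℂ)
          (b (Fin.cons ((@Fin.insertNth (k+1) (fun _ => Fin m) t i c) t) ((@Fin.insertNth (k+1) (fun _ => Fin m) t i c) ∘ (s.succAbove ∘ t'.succAbove))))) *
        ((starRingEnd ℂ) (a ((@Fin.insertNth (k+1) (fun _ => Fin m) t i c) s)) *
          b (Fin.cons ((@Fin.insertNth (k+1) (fun _ => Fin m) t i c) s) ((@Fin.insertNth (k+1) (fun _ => Fin m) t i c) ∘ (s.succAbove ∘ t'.succAbove))))) =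
      -((a i * (starRingEnd ℂ) (b (Fin.cons i (c ∘ p.succAbove)))) *
        ((starRingEnd ℂ) (a (c p)) * b (Fin.cons (c p) (c ∘ p.succAbove)))) := by
    intro i c
    have hA : (@Fin.insertNth (k+1) (fun _ => Fin m) t i c) t = i := by simp
    have hB : (@Fin.insertNth (k+1) (fun _ => Fin m) t i c) s = c p := by
      rw [← h1, Fin.insertNth_apply_succAbove]
    have hC : (@Fin.insertNth (k+1) (fun _ => Fin m) t i c) ∘ (s.succAbove ∘ t'.succAbove) = c ∘ p.succAbove := by
      rw [← hE]
      funext j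
      simp
    rw [hA, hB, hC]
  simp only [step1]
  have step2 : ∀ i : Fin m,
      (∑ c : Fin (k + 1) → Fin m,
        -((a i * (starRingEnd ℂ) (b (Fin.cons i (c ∘ p.succAbove)))) *
          ((starRingEnd ℂ) (a (c p)) * b (Fin.cons (c p) (c ∘ p.succAbove))))) =
      ∑ j : Fin m, ∑ J : Fin k → Fin m,
        -((a i * (starRingEnd ℂ) (b (Fin.cons i J))) *
          ((starRingEnd ℂ) (a j) * b (Fin.cons j J))) := by
    intro i
    rw [sum_insertNth (fun c => -((a i * (starRingEnd ℂ) (b (Fin.cons i (c ∘ p.succAbove)))) *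
          ((starRingEnd ℂ) (a (c p)) * b (Fin.cons (c p) (c ∘ p.succAbove))))) p]
    refine Finset.sum_congr rfl fun j _ => Finset.sum_congr rfl fun J _ => ?_
    have hA : (@Fin.insertNth k (fun _ => Fin m) p j J) p = j := by simp
    have hB : (@Fin.insertNth k (fun _ => Fin m) p j J) ∘ p.succAbove = J := by
      funext x
      simp
    rw [hA, hB]
  rw [Finset.sum_congr rfl fun i _ => step2 i]
  -- reorder sums and recognize the squared norm
  have swap : (∑ i : Fin m, ∑ j : Fin m, ∑ J : Fin k → Fin m,
        -((a i * (starRingEnd ℂ) (b (Fin.cons i J))) *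
          ((starRingEnd ℂ) (a j) * b (Fin.cons j J)))) =
      ∑ J : Fin k → Fin m, ∑ i : Fin m, ∑ j : Fin m,
        -((a i * (starRingEnd ℂ) (b (Fin.cons i J))) *
          ((starRingEnd ℂ) (a j) * b (Fin.cons j J))) := by
    calc (∑ i : Fin m, ∑ j : Fin m, ∑ J : Fin k → Fin m,
            -((a i * (starRingEnd ℂ) (b (Fin.cons i J))) *
              ((starRingEnd ℂ) (a j) * b (Fin.cons j J))))
        = ∑ j : Fin m, ∑ i : Fin m, ∑ J : Fin k → Fin m,
            -((a i * (starRingEnd ℂ) (b (Fin.cons i J))) *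
              ((starRingEnd ℂ) (a j) * b (Fin.cons j J))) := Finset.sum_comm
      _ = ∑ j : Fin m, ∑ J : Fin k → Fin m, ∑ i : Fin m,
            -((a i * (starRingEnd ℂ) (b (Fin.cons i J))) *
              ((starRingEnd ℂ) (a j) * b (Fin.cons j J))) :=
          Finset.sum_congr rfl fun j _ => Finset.sum_comm
      _ = ∑ J : Fin k → Fin m, ∑ j : Fin m, ∑ i : Fin m,
            -((a i * (starRingEnd ℂ) (b (Fin.cons i J))) *
              ((starRingEnd ℂ) (a j) * b (Fin.cons j J))) := Finset.sum_comm
      _ = ∑ J : Fin k → Fin m, ∑ i : Fin m, ∑ j : Fin m,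
            -((a i * (starRingEnd ℂ) (b (Fin.cons i J))) *
              ((starRingEnd ℂ) (a j) * b (Fin.cons j J))) :=
          Finset.sum_congr rfl fun J _ => Finset.sum_comm
  rw [swap]
  have hJ : ∀ J : Fin k → Fin m,
      (∑ i : Fin m, ∑ j : Fin m,
        -((a i * (starRingEnd ℂ) (b (Fin.cons i J))) *
          ((starRingEnd ℂ) (a j) * b (Fin.cons j J)))) =
      -((‖∑ i : Fin m, a i * (starRingEnd ℂ) (b (Fin.cons i J))‖ ^ 2 : ℝ) : ℂ) := by
    intro J
    have e3 : (∑ i : Fin m, ∑ j : Fin m,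
        -((a i * (starRingEnd ℂ) (b (Fin.cons i J))) *
          ((starRingEnd ℂ) (a j) * b (Fin.cons j J)))) =
        -((∑ i : Fin m, a i * (starRingEnd ℂ) (b (Fin.cons i J))) *
          (∑ j : Fin m, (starRingEnd ℂ) (a j) * b (Fin.cons j J))) := by
      simp only [Finset.sum_neg_distrib]
      rw [Finset.sum_mul_sum]
    rw [e3]
    have e4 : (∑ j : Fin m, (starRingEnd ℂ) (a j) * b (Fin.cons j J)) =
        (starRingEnd ℂ) (∑ i : Fin m, a i * (starRingEnd ℂ) (b (Fin.cons i J))) := by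
      rw [map_sum]
      exact Finset.sum_congr rfl fun j _ => by rw [map_mul, Complex.conj_conj]
    rw [e4, Complex.mul_conj, Complex.sq_norm]
  rw [Finset.sum_congr rfl fun J _ => hJ J]
  rw [Finset.sum_neg_distrib, neg_inj]
  push_cast
  rfl
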